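/- Let a = 1/√3 and let γ, C₁, C₂ be real constants. Define on ℝ the functions ρ̂(x) = γ·e^{−2x/a} + (3/2)C₁, q̂(x) = (a/2)·γ·e^{−2x/a} + (3/2)C₂, q(x) = C₁, and ρ(x) = 3a·γ·e^{−2x/a} + 3C₂. Then these functions solve the half-moment half-space system: q' = 0, (−(1/6)ρ + q̂)' = 0, q̂' = −(ρ̂ − (3/2)q), and (−(1/6)ρ̂ + q)' = −(q̂ − ρ/2). Moreover ρ(x) → 3C₂ and q̂(x) → (3/2)C₂ as x → ∞. -/

import Mathlib

lemma hm_aux (a : ℝ) (c d x : ℝ) :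
    HasDerivAt (fun y => c * Real.exp (-2 * y / a) + d)
      (c * (-2 / a) * Real.exp (-2 * x / a)) x := by
  have h1 : HasDerivAt (fun y : ℝ => -2 * y / a) (-2 / a) x := by
    simpa using ((hasDerivAt_id x).const_mul (-2)).div_const a
  have h2 := (h1.exp.const_mul c).add_const d
  exact h2.congr_deriv (by ring)

lemma hm_tendsto (a : ℝ) (ha : 0 < a) (c d : ℝ) :
    Filter.Tendsto (fun x => c * Real.exp (-2 * x / a) + d) Filter.atTop (nhds d) := by
  have h1 : Filter.Tendsto (fun x : ℝ => -2 * x / a) Filter.atTop Filter.atBot := by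
    apply Filter.Tendsto.atBot_div_const ha
    exact Filter.tendsto_id.const_mul_atTop_of_neg (by norm_num)
  have h2 := (Real.tendsto_exp_atBot.comp h1).const_mul c
  simpa using h2.add_const d

/-- The displayed exponential functions solve the half-moment half-space system
for a = 1/√3, with the stated limits at infinity. -/
theorem halfmoment_halfspace_explicit_solution (γ C₁ C₂ a : ℝ)
    (ha : a = 1 / Real.sqrt 3)
    (ρh qh q ρ : ℝ → ℝ)
    (hρh : ρh = fun x => γ * Real.exp (-2 * x / a) + (3 / 2) * C₁)
    (hqh : qh = fun x => (a / 2) * γ * Real.exp (-2 * x / a) + (3 / 2) * C₂)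
    (hq : q = fun _ => C₁)
    (hρ : ρ = fun x => 3 * a * γ * Real.exp (-2 * x / a) + 3 * C₂) :
    (∀ x, deriv q x = 0) ∧
    (∀ x, deriv (fun y => -(1 / 6) * ρ y + qh y) x = 0) ∧
    (∀ x, deriv qh x = -(ρh x - (3 / 2) * q x)) ∧
    (∀ x, deriv (fun y => -(1 / 6) * ρh y + q y) x = -(qh x - ρ x / 2)) ∧
    Filter.Tendsto ρ Filter.atTop (nhds (3 * C₂)) ∧
    Filter.Tendsto qh Filter.atTop (nhds ((3 / 2) * C₂)) := by
  have h3 : Real.sqrt 3 > 0 := Real.sqrt_pos.mpr (by norm_num)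
  have hapos : 0 < a := by rw [ha]; positivity
  have hane : a ≠ 0 := ne_of_gt hapos
  have ha2 : a ^ 2 = 1 / 3 := by
    rw [ha, div_pow, one_pow, Real.sq_sqrt (by norm_num : (3:ℝ) ≥ 0)]
  subst hρh hqh hq hρ
  refine ⟨fun x => deriv_const x C₁, fun x => ?_, fun x => ?_, fun x => ?_,
    hm_tendsto a hapos _ _, hm_tendsto a hapos _ _⟩
  · have h : (fun y => -(1 / 6) * (3 * a * γ * Real.exp (-2 * y / a) + 3 * C₂) +
        ((a / 2) * γ * Real.exp (-2 * y / a) + (3 / 2) * C₂)) =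
        fun y => (-(1/6) * (3 * a * γ) + (a / 2) * γ) * Real.exp (-2 * y / a) +
          (-(1/6) * (3 * C₂) + (3/2) * C₂) := by
      funext y; ring
    rw [h, (hm_aux a _ _ x).deriv]
    ring
  · rw [(hm_aux a _ _ x).deriv]
    field_simp
    ring
  · have h : (fun y => -(1 / 6) * (γ * Real.exp (-2 * y / a) + (3 / 2) * C₁) + C₁) =
        fun y => (-(1/6) * γ) * Real.exp (-2 * y / a) + (-(1/6) * ((3/2) * C₁) + C₁) := by
      funext y; ring
    rw [h, (hm_aux a _ _ x).deriv]
    have : a * a = 1 / 3 := by rw [← sq]; exact ha2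
    field_simp
    linear_combination (-12 * γ * Real.exp (-(2 * x / a))) * this
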